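/- Let α > 0, δ > 0, T > 0 and let m be a positive integer. Let B₀, B₁, B₂ : [0,∞) × [0,T] → (m × m real matrices) be continuously differentiable, bounded together with their first derivatives, and assume the strong ellipticity condition ξ·(B₀(x,t) + B₀(x,t)ᵀ)ξ ≥ δ|ξ|² for all (x,t) and all ξ ∈ ℝ^m. Let u : [0,∞) × [0,T] → ℝ^m be smooth, and suppose that for each t ∈ [0,T] the functions x ↦ ∂ₓʲu(x,t) for j = 0,1,2,3 and x ↦ ∂ₜu(x,t), ∂ₜ∂ₓu(x,t) are square integrable on (0,∞) and tend to 0 as x → ∞, locally uniformly in t so that the energies ‖∂ₓʲu(·,t)‖²_{L²(0,∞)} (j = 0,1,2) are differentiable in t with derivative obtained by differentiating under the integral. If u satisfies u_t = α u_{xxx} + B₀ u_{xx} + B₁ u_x + B₂ u on (0,∞) × (0,T), u(x,0) = 0 for all x ≥ 0, and both boundary conditions u(0,t) = 0 and ∂ₓu(0,t) = 0 for all t ∈ [0,T], then u is identically zero on [0,∞) × [0,T]. -/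

import Mathlib

open MeasureTheory Filter Set Topology

set_option maxHeartbeats 2000000


local notation "⟪" x ", " y "⟫" => @inner ℝ _ _ x y

/-- Gronwall-type: E continuous on [0,T], E(0)=0, E ≥ 0, E' ≤ K E on (0,T) ⇒ E ≡ 0. -/
lemma aux_gronwall_zero (T K : ℝ) (E E' : ℝ → ℝ)
    (hcont : ContinuousOn E (Icc 0 T)) (hE0 : E 0 = 0)
    (hpos : ∀ t ∈ Icc 0 T, 0 ≤ E t)
    (hderiv : ∀ t ∈ Ioo 0 T, HasDerivAt E (E' t) t)
    (hineq : ∀ t ∈ Ioo 0 T, E' t ≤ K * E t) : ∀ t ∈ Icc 0 T, E t = 0 := by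
  set g : ℝ → ℝ := fun t => E t * Real.exp (-K * t) with hg
  have hganti : AntitoneOn g (Icc 0 T) := by
    apply antitoneOn_of_deriv_nonpos (convex_Icc 0 T)
    · exact hcont.mul (Real.continuous_exp.comp (by continuity)).continuousOn
    · intro t ht
      rw [interior_Icc] at ht
      exact ((hderiv t ht).mul ((hasDerivAt_id t).const_mul (-K)).exp
        ).differentiableAt.differentiableWithinAt
    · intro t ht
      rw [interior_Icc] at ht
      have h1 : HasDerivAt (fun t => Real.exp (-K * t)) (Real.exp (-K * t) * (-K)) t := by
        simpa [mul_comm] using ((hasDerivAt_id t).const_mul (-K)).exp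
      have h2 : HasDerivAt g (E' t * Real.exp (-K * t) + E t * (Real.exp (-K * t) * (-K))) t :=
        HasDerivAt.mul (hderiv t ht) h1
      rw [h2.deriv]
      have hE := hineq t ht
      have hex : (0:ℝ) < Real.exp (-K * t) := Real.exp_pos _
      nlinarith [hex.le]
  intro t ht
  have h1 : g t ≤ g 0 := by
    rcases eq_or_lt_of_le ht.1 with h | h
    · rw [← h]
    · exact hganti (left_mem_Icc.2 (ht.1.trans ht.2)) ht ht.1
  have h2 : g 0 = 0 := by simp [hg, hE0]
  have h3 : 0 ≤ g t := mul_nonneg (hpos t ht) (Real.exp_pos _).le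
  have h4 : g t = 0 := le_antisymm (h1.trans_eq h2) h3
  have hex : (0:ℝ) < Real.exp (-K * t) := Real.exp_pos _
  rcases mul_eq_zero.1 h4 with h | h
  · exact h
  · exact absurd h hex.ne'

/-- Nonnegative continuous function with zero integral on (0,∞) vanishes. -/
lemma aux_zero_of_integral (f : ℝ → ℝ) (hf : ContinuousOn f (Ioi 0)) (h0 : ∀ x, 0 ≤ f x)
    (hint : IntegrableOn f (Ioi 0)) (h : ∫ x in Ioi (0:ℝ), f x = 0) :
    ∀ x ∈ Ioi (0:ℝ), f x = 0 := by
  have hae : f =ᵐ[volume.restrict (Ioi 0)] 0 := by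
    refine (integral_eq_zero_iff_of_nonneg ?_ hint).1 h
    intro x; exact h0 x
  by_contra hc
  push_neg at hc
  obtain ⟨x₀, hx₀, hfx₀⟩ := hc
  have hpos : 0 < f x₀ := (h0 x₀).lt_of_ne (Ne.symm hfx₀)
  have hopen : IsOpen {x | x ∈ Ioi (0:ℝ) ∧ f x₀ / 2 < f x} := by
    have : {x | x ∈ Ioi (0:ℝ) ∧ f x₀ / 2 < f x} = Ioi 0 ∩ (f ⁻¹' Ioi (f x₀ / 2)) ∩ Ioi 0 := by
      ext x
      simp only [mem_setOf_eq, mem_inter_iff, mem_preimage, mem_Ioi]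
      tauto
    rw [this]
    exact (hf.isOpen_inter_preimage isOpen_Ioi isOpen_Ioi).inter isOpen_Ioi
  have hmem : x₀ ∈ {x | x ∈ Ioi (0:ℝ) ∧ f x₀ / 2 < f x} := ⟨hx₀, by linarith⟩
  have hμ : 0 < volume {x | x ∈ Ioi (0:ℝ) ∧ f x₀ / 2 < f x} :=
    hopen.measure_pos volume ⟨x₀, hmem⟩
  have hnull : volume.restrict (Ioi 0) {x | x ∈ Ioi (0:ℝ) ∧ f x₀ / 2 < f x} = 0 := by
    have hsub : {x | x ∈ Ioi (0:ℝ) ∧ f x₀ / 2 < f x} ⊆ {x | f x ≠ 0} := by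
      intro x hx
      have : 0 < f x := lt_of_le_of_lt (by positivity) hx.2
      exact this.ne'
    refine measure_mono_null hsub ?_
    simpa using ae_iff.1 hae
  rw [Measure.restrict_apply₀' measurableSet_Ioi.nullMeasurableSet] at hnull
  have hss : {x | x ∈ Ioi (0:ℝ) ∧ f x₀ / 2 < f x} ∩ Ioi 0
      = {x | x ∈ Ioi (0:ℝ) ∧ f x₀ / 2 < f x} := by
    ext x; simp only [mem_inter_iff, mem_setOf_eq, and_iff_left_iff_imp]
    exact fun h => h.1
  rw [hss] at hnull
  exact absurd hnull hμ.ne'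

/-- integrability of a function bounded by `C‖f‖‖g‖` with `f,g` square integrable. -/
lemma aux_int {E : Type*} [NormedAddCommGroup E] (h : ℝ → ℝ) (C : ℝ) (f g : ℝ → E)
    (hmeas : AEStronglyMeasurable h (volume.restrict (Ioi 0)))
    (hf : IntegrableOn (fun x => ‖f x‖ ^ 2) (Ioi 0))
    (hg : IntegrableOn (fun x => ‖g x‖ ^ 2) (Ioi 0))
    (hb : ∀ x ∈ Ioi (0:ℝ), |h x| ≤ C * (‖f x‖ * ‖g x‖)) :
    IntegrableOn h (Ioi 0) := by
  have hC : 0 ≤ C ∨ ∀ x ∈ Ioi (0:ℝ), |h x| ≤ 0 := by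
    by_cases hC0 : 0 ≤ C
    · exact Or.inl hC0
    · right; intro x hx
      exact (hb x hx).trans (mul_nonpos_of_nonpos_of_nonneg (le_of_lt (not_le.1 hC0))
        (mul_nonneg (norm_nonneg _) (norm_nonneg _)))
  rcases hC with hC | hC
  · have hint : IntegrableOn (fun x => C / 2 * (‖f x‖ ^ 2 + ‖g x‖ ^ 2)) (Ioi 0) :=
      (hf.add hg).const_mul _
    refine Integrable.mono' hint hmeas ?_
    rw [ae_restrict_iff' measurableSet_Ioi]
    filter_upwards with x hx
    have h1 := hb x hx
    have h2 : ‖f x‖ * ‖g x‖ ≤ (‖f x‖ ^ 2 + ‖g x‖ ^ 2) / 2 := by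
      nlinarith [sq_nonneg (‖f x‖ - ‖g x‖)]
    have : |h x| ≤ C / 2 * (‖f x‖ ^ 2 + ‖g x‖ ^ 2) := by nlinarith
    simpa [Real.norm_eq_abs] using this
  · refine Integrable.mono' (integrable_zero _ _ _) hmeas ?_
    rw [ae_restrict_iff' measurableSet_Ioi]
    filter_upwards with x hx
    simpa [Real.norm_eq_abs] using hC x hx

/-- Cauchy–Schwarz with operator norm bound. -/
lemma aux_inner_op_bound {m : ℕ}
    (A : EuclideanSpace ℝ (Fin m) →L[ℝ] EuclideanSpace ℝ (Fin m)) (M : ℝ) (hA : ‖A‖ ≤ M)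
    (a w : EuclideanSpace ℝ (Fin m)) : |2 * ⟪a, A w⟫| ≤ 2 * M * (‖a‖ * ‖w‖) := by
  have h1 := abs_real_inner_le_norm a (A w)
  have h3 : ‖A w‖ ≤ M * ‖w‖ :=
    (A.le_opNorm w).trans (mul_le_mul_of_nonneg_right hA (norm_nonneg _))
  have h4 : |⟪a, A w⟫| ≤ ‖a‖ * (M * ‖w‖) :=
    h1.trans (mul_le_mul_of_nonneg_left h3 (norm_nonneg a))
  rw [abs_mul]
  have h5 : |(2:ℝ)| = 2 := by norm_num
  rw [h5]
  nlinarith [abs_nonneg ⟪a, A w⟫]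




open MeasureTheory Filter Set

/-- Uniqueness for the half-line initial-boundary value problem with `α > 0`:
a classical solution of `u_t = α u_{xxx} + B₀ u_{xx} + B₁ u_x + B₂ u` on `(0,∞) × (0,T)`
with square-integrable decaying derivatives, zero initial data `u(x,0) = 0`, and the two
boundary conditions `u(0,t) = 0` and `u_x(0,t) = 0`, vanishes identically, provided the
matrix coefficients are `C¹`, bounded with their first derivatives, and `B₀` is strongly
elliptic: `ξ·(B₀ + B₀ᵀ)ξ ≥ δ|ξ|²`. -/
theorem stmt18 (α δ T : ℝ) (hα : 0 < α) (hδ : 0 < δ) (hT : 0 < T) (m : ℕ) (hm : 0 < m)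
    (B₀ B₁ B₂ : ℝ → ℝ → (EuclideanSpace ℝ (Fin m) →L[ℝ] EuclideanSpace ℝ (Fin m)))
    -- the coefficients are C¹ and bounded together with their first derivatives
    (hB : ∀ B ∈ ({B₀, B₁, B₂} :
        Set (ℝ → ℝ → (EuclideanSpace ℝ (Fin m) →L[ℝ] EuclideanSpace ℝ (Fin m)))),
      ContDiffOn ℝ 1 (fun p : ℝ × ℝ => B p.1 p.2) (Ici 0 ×ˢ Icc 0 T) ∧
      ∃ M : ℝ, ∀ p ∈ (Ici 0 ×ˢ Icc 0 T : Set (ℝ × ℝ)),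
        ‖B p.1 p.2‖ ≤ M ∧
        ‖fderivWithin ℝ (fun p : ℝ × ℝ => B p.1 p.2) (Ici 0 ×ˢ Icc 0 T) p‖ ≤ M)
    -- strong ellipticity of B₀
    (hell : ∀ x ∈ Ici (0 : ℝ), ∀ t ∈ Icc (0 : ℝ) T, ∀ ξ : EuclideanSpace ℝ (Fin m),
      δ * ‖ξ‖ ^ 2 ≤ (inner ℝ ξ (B₀ x t ξ) : ℝ) + (inner ℝ (B₀ x t ξ) ξ : ℝ))
    (u u1 u2 u3 ut ut1 ut2 : ℝ → ℝ → EuclideanSpace ℝ (Fin m))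
    -- u is smooth: space derivatives u1, u2, u3 and time derivatives ut, ut1, ut2
    (hd1 : ∀ t ∈ Icc (0 : ℝ) T, ∀ x ∈ Ici (0 : ℝ),
      HasDerivWithinAt (fun x => u x t) (u1 x t) (Ici 0) x)
    (hd2 : ∀ t ∈ Icc (0 : ℝ) T, ∀ x ∈ Ici (0 : ℝ),
      HasDerivWithinAt (fun x => u1 x t) (u2 x t) (Ici 0) x)
    (hd3 : ∀ t ∈ Icc (0 : ℝ) T, ∀ x ∈ Ici (0 : ℝ),
      HasDerivWithinAt (fun x => u2 x t) (u3 x t) (Ici 0) x)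
    (hdt : ∀ x ∈ Ici (0 : ℝ), ∀ t ∈ Icc (0 : ℝ) T,
      HasDerivWithinAt (fun t => u x t) (ut x t) (Icc 0 T) t)
    (hdt1 : ∀ x ∈ Ici (0 : ℝ), ∀ t ∈ Icc (0 : ℝ) T,
      HasDerivWithinAt (fun t => u1 x t) (ut1 x t) (Icc 0 T) t)
    (hdt2 : ∀ x ∈ Ici (0 : ℝ), ∀ t ∈ Icc (0 : ℝ) T,
      HasDerivWithinAt (fun t => u2 x t) (ut2 x t) (Icc 0 T) t)
    (hcont : ∀ f ∈ ({u, u1, u2, u3, ut, ut1, ut2} :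
        Set (ℝ → ℝ → EuclideanSpace ℝ (Fin m))),
      ContinuousOn (fun p : ℝ × ℝ => f p.1 p.2) (Ici 0 ×ˢ Icc 0 T))
    -- square integrability in x on (0,∞)
    (hint : ∀ t ∈ Icc (0 : ℝ) T,
      IntegrableOn (fun x => ‖u x t‖ ^ 2) (Ioi 0) ∧
      IntegrableOn (fun x => ‖u1 x t‖ ^ 2) (Ioi 0) ∧
      IntegrableOn (fun x => ‖u2 x t‖ ^ 2) (Ioi 0) ∧
      IntegrableOn (fun x => ‖u3 x t‖ ^ 2) (Ioi 0) ∧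
      IntegrableOn (fun x => ‖ut x t‖ ^ 2) (Ioi 0) ∧
      IntegrableOn (fun x => ‖ut1 x t‖ ^ 2) (Ioi 0))
    -- decay as x → ∞
    (hdec : ∀ t ∈ Icc (0 : ℝ) T,
      Tendsto (fun x => ‖u x t‖ + ‖u1 x t‖ + ‖u2 x t‖ + ‖u3 x t‖ + ‖ut x t‖ + ‖ut1 x t‖)
        atTop (nhds 0))
    -- differentiation under the integral sign for the energies ‖∂ₓʲu(·,t)‖², j = 0,1,2
    (hE0 : ∀ t ∈ Icc (0 : ℝ) T,
      HasDerivWithinAt (fun t => ∫ x in Ioi (0 : ℝ), ‖u x t‖ ^ 2)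
        (∫ x in Ioi (0 : ℝ), 2 * (inner ℝ (u x t) (ut x t) : ℝ)) (Icc 0 T) t)
    (hE1 : ∀ t ∈ Icc (0 : ℝ) T,
      HasDerivWithinAt (fun t => ∫ x in Ioi (0 : ℝ), ‖u1 x t‖ ^ 2)
        (∫ x in Ioi (0 : ℝ), 2 * (inner ℝ (u1 x t) (ut1 x t) : ℝ)) (Icc 0 T) t)
    (hE2 : ∀ t ∈ Icc (0 : ℝ) T,
      HasDerivWithinAt (fun t => ∫ x in Ioi (0 : ℝ), ‖u2 x t‖ ^ 2)
        (∫ x in Ioi (0 : ℝ), 2 * (inner ℝ (u2 x t) (ut2 x t) : ℝ)) (Icc 0 T) t)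
    -- the equation on (0,∞) × (0,T)
    (hPDE : ∀ x ∈ Ioi (0 : ℝ), ∀ t ∈ Ioo (0 : ℝ) T,
      ut x t = α • u3 x t + B₀ x t (u2 x t) + B₁ x t (u1 x t) + B₂ x t (u x t))
    -- zero initial data
    (hinit : ∀ x ∈ Ici (0 : ℝ), u x 0 = 0)
    -- Dirichlet and Neumann boundary conditions
    (hbdryD : ∀ t ∈ Icc (0 : ℝ) T, u 0 t = 0)
    (hbdryN : ∀ t ∈ Icc (0 : ℝ) T, u1 0 t = 0) :
    ∀ x ∈ Ici (0 : ℝ), ∀ t ∈ Icc (0 : ℝ) T, u x t = 0 := by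
  obtain ⟨hB₀c, M₀, hM₀⟩ := hB B₀ (by simp)
  obtain ⟨hB₁c, M₁, hM₁⟩ := hB B₁ (by simp)
  obtain ⟨hB₂c, M₂, hM₂⟩ := hB B₂ (by simp)
  set S : Set (ℝ × ℝ) := Ici 0 ×ˢ Icc 0 T with hSdef
  set M : ℝ := max 1 (max M₀ (max M₁ M₂)) with hMdef
  have hM1 : (1:ℝ) ≤ M := le_max_left _ _
  have hMpos : (0:ℝ) < M := lt_of_lt_of_le one_pos hM1
  have hM₀M : M₀ ≤ M := le_trans (le_max_left _ _) (le_max_right _ _)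
  have hM₁M : M₁ ≤ M := le_trans (le_trans (le_max_left _ _) (le_max_right _ _))
    (le_max_right _ _)
  have hM₂M : M₂ ≤ M := le_trans (le_trans (le_max_right _ _) (le_max_right _ _))
    (le_max_right _ _)
  set K : ℝ := 4 * M ^ 2 / δ + 2 * M with hKdef
  have hKpos : 0 ≤ K := by positivity
  -- slice continuity
  have slice : ∀ t ∈ Icc (0:ℝ) T, ∀ f : ℝ → ℝ → EuclideanSpace ℝ (Fin m),
      ContinuousOn (fun p : ℝ × ℝ => f p.1 p.2) S →
      ContinuousOn (fun x => f x t) (Ici 0) := by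
    intro t ht f hf
    exact hf.comp (continuous_id.prodMk continuous_const).continuousOn
      (fun x hx => ⟨hx, ht⟩)
  have cmono : Ioi (0:ℝ) ⊆ Ici 0 := Ioi_subset_Ici_self
  -- the key differential inequality
  have key : ∀ t ∈ Ioo (0:ℝ) T,
      (∫ x in Ioi (0:ℝ), 2 * (inner ℝ (u x t) (ut x t) : ℝ))
        ≤ K * ∫ x in Ioi (0:ℝ), ‖u x t‖ ^ 2 := by
    intro t ht
    have htI : t ∈ Icc (0:ℝ) T := ⟨ht.1.le, ht.2.le⟩
    have cu := slice t htI u (hcont u (by simp))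
    have cu1 := slice t htI u1 (hcont u1 (by simp))
    have cu2 := slice t htI u2 (hcont u2 (by simp))
    have cu3 := slice t htI u3 (hcont u3 (by simp))
    obtain ⟨i0, i1, i2, i3, it0, it1⟩ := hint t htI
    have du : ∀ x ∈ Ioi (0:ℝ), HasDerivAt (fun x => u x t) (u1 x t) x :=
      fun x hx => (hd1 t htI x (mem_Ici.2 (mem_Ioi.1 hx).le)).hasDerivAt (Ici_mem_nhds hx)
    have du1 : ∀ x ∈ Ioi (0:ℝ), HasDerivAt (fun x => u1 x t) (u2 x t) x :=
      fun x hx => (hd2 t htI x (mem_Ici.2 (mem_Ioi.1 hx).le)).hasDerivAt (Ici_mem_nhds hx)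
    have du2 : ∀ x ∈ Ioi (0:ℝ), HasDerivAt (fun x => u2 x t) (u3 x t) x :=
      fun x hx => (hd3 t htI x (mem_Ici.2 (mem_Ioi.1 hx).le)).hasDerivAt (Ici_mem_nhds hx)
    have cb0 : ContinuousOn (fun x => B₀ x t) (Ici 0) :=
      hB₀c.continuousOn.comp (continuous_id.prodMk continuous_const).continuousOn
        (fun x hx => ⟨hx, htI⟩)
    have cb1 : ContinuousOn (fun x => B₁ x t) (Ici 0) :=
      hB₁c.continuousOn.comp (continuous_id.prodMk continuous_const).continuousOn
        (fun x hx => ⟨hx, htI⟩)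
    have cb2 : ContinuousOn (fun x => B₂ x t) (Ici 0) :=
      hB₂c.continuousOn.comp (continuous_id.prodMk continuous_const).continuousOn
        (fun x hx => ⟨hx, htI⟩)
    set b' : ℝ → (EuclideanSpace ℝ (Fin m) →L[ℝ] EuclideanSpace ℝ (Fin m)) :=
      fun x => (fderivWithin ℝ (fun p : ℝ × ℝ => B₀ p.1 p.2) S (x, t)) (1, 0) with hb'def
    have db0 : ∀ x ∈ Ioi (0:ℝ), HasDerivAt (fun x => B₀ x t) (b' x) x := by
      intro x hx
      have hmem : ((x, t) : ℝ × ℝ) ∈ S := ⟨mem_Ici.2 (le_of_lt hx), htI⟩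
      have hnb : S ∈ 𝓝 ((x, t) : ℝ × ℝ) := by
        rw [hSdef]; exact prod_mem_nhds (Ici_mem_nhds hx) (Icc_mem_nhds ht.1 ht.2)
      have hdiff := (hB₀c.differentiableOn one_ne_zero) (x, t) hmem
      have hF := hdiff.hasFDerivWithinAt.hasFDerivAt hnb
      exact hF.comp_hasDerivAt x (HasDerivAt.prodMk (hasDerivAt_id x) (hasDerivAt_const x t))
    have hSud : UniqueDiffOn ℝ S := by
      rw [hSdef]
      apply uniqueDiffOn_convex ((convex_Ici 0).prod (convex_Icc 0 T))
      rw [interior_prod_eq, interior_Ici, interior_Icc]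
      exact ⟨(1, T/2), by
        constructor
        · exact mem_Ioi.2 one_pos
        · exact ⟨half_pos hT, half_lt_self hT⟩⟩
    have cb' : ContinuousOn b' (Ioi 0) := by
      have cfd := hB₀c.continuousOn_fderivWithin hSud le_rfl
      have h1 : ContinuousOn
          (fun x : ℝ => fderivWithin ℝ (fun p : ℝ × ℝ => B₀ p.1 p.2) S (x, t)) (Ioi 0) :=
        cfd.comp (continuous_id.prodMk continuous_const).continuousOn
          (fun x hx => ⟨cmono hx, htI⟩)
      exact h1.clm_apply continuousOn_const
    have bb0 : ∀ x ∈ Ici (0:ℝ), ‖B₀ x t‖ ≤ M :=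
      fun x hx => ((hM₀ (x, t) ⟨hx, htI⟩).1).trans hM₀M
    have bb1 : ∀ x ∈ Ici (0:ℝ), ‖B₁ x t‖ ≤ M :=
      fun x hx => ((hM₁ (x, t) ⟨hx, htI⟩).1).trans hM₁M
    have bb2 : ∀ x ∈ Ici (0:ℝ), ‖B₂ x t‖ ≤ M :=
      fun x hx => ((hM₂ (x, t) ⟨hx, htI⟩).1).trans hM₂M
    have bb' : ∀ x ∈ Ici (0:ℝ), ‖b' x‖ ≤ M := by
      intro x hx
      have h1 := (fderivWithin ℝ (fun p : ℝ × ℝ => B₀ p.1 p.2) S (x, t)).le_opNorm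
        (((1:ℝ), (0:ℝ)) : ℝ × ℝ)
      have h2 : ‖(((1:ℝ), (0:ℝ)) : ℝ × ℝ)‖ = 1 := by simp [Prod.norm_def]
      rw [h2, mul_one] at h1
      exact h1.trans (((hM₀ (x, t) ⟨hx, htI⟩).2).trans hM₀M)
    -- decay of the individual norms
    have hdecs := hdec t htI
    have dv : Tendsto (fun x => ‖u x t‖) atTop (𝓝 0) :=
      squeeze_zero (fun x => norm_nonneg _) (fun x => by
        have h1 := norm_nonneg (u1 x t); have h2 := norm_nonneg (u2 x t)
        have h3 := norm_nonneg (u3 x t); have h4 := norm_nonneg (ut x t)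
        have h5 := norm_nonneg (ut1 x t); linarith) hdecs
    have dv1 : Tendsto (fun x => ‖u1 x t‖) atTop (𝓝 0) :=
      squeeze_zero (fun x => norm_nonneg _) (fun x => by
        have h1 := norm_nonneg (u x t); have h2 := norm_nonneg (u2 x t)
        have h3 := norm_nonneg (u3 x t); have h4 := norm_nonneg (ut x t)
        have h5 := norm_nonneg (ut1 x t); linarith) hdecs
    have dv2 : Tendsto (fun x => ‖u2 x t‖) atTop (𝓝 0) :=
      squeeze_zero (fun x => norm_nonneg _) (fun x => by
        have h1 := norm_nonneg (u x t); have h2 := norm_nonneg (u1 x t)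
        have h3 := norm_nonneg (u3 x t); have h4 := norm_nonneg (ut x t)
        have h5 := norm_nonneg (ut1 x t); linarith) hdecs
    -- the pieces
    set Fd : ℝ → ℝ := fun x => 2 * α * ⟪u x t, u3 x t⟫ with hFd
    set p0 : ℝ → ℝ := fun x => 2 * ⟪u x t, B₀ x t (u2 x t)⟫ with hp0
    set p1 : ℝ → ℝ := fun x => 2 * ⟪u1 x t, B₀ x t (u1 x t)⟫ with hp1
    set p2 : ℝ → ℝ := fun x => 2 * ⟪u x t, b' x (u1 x t)⟫ with hp2
    set p3 : ℝ → ℝ := fun x => 2 * ⟪u x t, B₁ x t (u1 x t)⟫ with hp3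
    set p4 : ℝ → ℝ := fun x => 2 * ⟪u x t, B₂ x t (u x t)⟫ with hp4
    have cFd : ContinuousOn Fd (Ioi 0) :=
      continuousOn_const.mul ((cu.mono cmono).inner (cu3.mono cmono))
    have cp0 : ContinuousOn p0 (Ioi 0) :=
      continuousOn_const.mul ((cu.mono cmono).inner
        ((cb0.mono cmono).clm_apply (cu2.mono cmono)))
    have cp1 : ContinuousOn p1 (Ioi 0) :=
      continuousOn_const.mul ((cu1.mono cmono).inner
        ((cb0.mono cmono).clm_apply (cu1.mono cmono)))
    have cp2 : ContinuousOn p2 (Ioi 0) :=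
      continuousOn_const.mul ((cu.mono cmono).inner (cb'.clm_apply (cu1.mono cmono)))
    have cp3 : ContinuousOn p3 (Ioi 0) :=
      continuousOn_const.mul ((cu.mono cmono).inner
        ((cb1.mono cmono).clm_apply (cu1.mono cmono)))
    have cp4 : ContinuousOn p4 (Ioi 0) :=
      continuousOn_const.mul ((cu.mono cmono).inner
        ((cb2.mono cmono).clm_apply (cu.mono cmono)))
    have iFd : IntegrableOn Fd (Ioi 0) := by
      apply aux_int Fd (2*α) (fun x => u x t) (fun x => u3 x t)
        (cFd.aestronglyMeasurable measurableSet_Ioi) i0 i3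
      intro x hx
      simp only [hFd]
      rw [abs_mul, show |(2:ℝ)*α| = 2*α from abs_of_pos (by linarith)]
      exact mul_le_mul_of_nonneg_left (abs_real_inner_le_norm _ _) (by linarith)
    have ip0 : IntegrableOn p0 (Ioi 0) := by
      apply aux_int p0 (2*M) (fun x => u x t) (fun x => u2 x t)
        (cp0.aestronglyMeasurable measurableSet_Ioi) i0 i2
      intro x hx
      simp only [hp0]
      exact aux_inner_op_bound _ M (bb0 x (cmono hx)) _ _
    have ip1 : IntegrableOn p1 (Ioi 0) := by
      apply aux_int p1 (2*M) (fun x => u1 x t) (fun x => u1 x t)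
        (cp1.aestronglyMeasurable measurableSet_Ioi) i1 i1
      intro x hx
      simp only [hp1]
      exact aux_inner_op_bound _ M (bb0 x (cmono hx)) _ _
    have ip2 : IntegrableOn p2 (Ioi 0) := by
      apply aux_int p2 (2*M) (fun x => u x t) (fun x => u1 x t)
        (cp2.aestronglyMeasurable measurableSet_Ioi) i0 i1
      intro x hx
      simp only [hp2]
      exact aux_inner_op_bound _ M (bb' x (cmono hx)) _ _
    have ip3 : IntegrableOn p3 (Ioi 0) := by
      apply aux_int p3 (2*M) (fun x => u x t) (fun x => u1 x t)
        (cp3.aestronglyMeasurable measurableSet_Ioi) i0 i1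
      intro x hx
      simp only [hp3]
      exact aux_inner_op_bound _ M (bb1 x (cmono hx)) _ _
    have ip4 : IntegrableOn p4 (Ioi 0) := by
      apply aux_int p4 (2*M) (fun x => u x t) (fun x => u x t)
        (cp4.aestronglyMeasurable measurableSet_Ioi) i0 i0
      intro x hx
      simp only [hp4]
      exact aux_inner_op_bound _ M (bb2 x (cmono hx)) _ _
    -- FTC for the dispersive term
    set F : ℝ → ℝ := fun x => α * (2 * ⟪u x t, u2 x t⟫ - ⟪u1 x t, u1 x t⟫) with hFdef
    have dF : ∀ x ∈ Ioi (0:ℝ), HasDerivAt F (Fd x) x := by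
      intro x hx
      have h1 := HasDerivAt.inner ℝ (du x hx) (du2 x hx)
      have h2 := HasDerivAt.inner ℝ (du1 x hx) (du1 x hx)
      have h3 := ((h1.const_mul (2:ℝ)).sub h2).const_mul α
      refine h3.congr_deriv ?_
      simp only [hFd]
      rw [real_inner_comm (u2 x t) (u1 x t)]
      ring
    have F0 : F 0 = 0 := by
      simp only [hFdef]
      rw [hbdryD t htI, hbdryN t htI]
      simp
    have Fcont : ContinuousOn F (Ici 0) :=
      continuousOn_const.mul ((continuousOn_const.mul (cu.inner cu2)).sub (cu1.inner cu1))
    have Flim : Tendsto F atTop (𝓝 0) := by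
      have hg : Tendsto (fun x => α * (2 * (‖u x t‖ * ‖u2 x t‖) + ‖u1 x t‖ * ‖u1 x t‖)) atTop
          (𝓝 (α * (2 * (0*0) + 0*0))) :=
        ((((dv.mul dv2).const_mul 2).add (dv1.mul dv1)).const_mul α)
      rw [show α * (2*((0:ℝ)*0)+0*0) = 0 by ring] at hg
      refine squeeze_zero_norm (fun x => ?_) hg
      have h1 := abs_real_inner_le_norm (u x t) (u2 x t)
      have h2 := abs_real_inner_le_norm (u1 x t) (u1 x t)
      have ha := abs_le.1 h1
      have hb := abs_le.1 h2
      have h3 : |2 * ⟪u x t, u2 x t⟫ - ⟪u1 x t, u1 x t⟫|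
          ≤ 2 * (‖u x t‖ * ‖u2 x t‖) + ‖u1 x t‖ * ‖u1 x t‖ := by
        rw [abs_le]
        constructor <;> linarith [ha.1, ha.2, hb.1, hb.2]
      simp only [hFdef, Real.norm_eq_abs]
      calc |α * (2 * ⟪u x t, u2 x t⟫ - ⟪u1 x t, u1 x t⟫)|
          = α * |2 * ⟪u x t, u2 x t⟫ - ⟪u1 x t, u1 x t⟫| := by
            rw [abs_mul, abs_of_pos hα]
        _ ≤ α * (2 * (‖u x t‖ * ‖u2 x t‖) + ‖u1 x t‖ * ‖u1 x t‖) :=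
            mul_le_mul_of_nonneg_left h3 hα.le
    have hFint : ∫ x in Ioi (0:ℝ), Fd x = 0 - F 0 :=
      integral_Ioi_of_hasDerivAt_of_tendsto (Fcont.continuousWithinAt self_mem_Ici) dF iFd Flim
    -- FTC for the elliptic term
    set G : ℝ → ℝ := fun x => 2 * ⟪u x t, B₀ x t (u1 x t)⟫ with hGdef
    have dG : ∀ x ∈ Ioi (0:ℝ), HasDerivAt G (p1 x + p2 x + p0 x) x := by
      intro x hx
      have hA : HasDerivAt (fun x => B₀ x t (u1 x t)) (b' x (u1 x t) + B₀ x t (u2 x t)) x :=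
        (db0 x hx).clm_apply (du1 x hx)
      have h1 := (HasDerivAt.inner ℝ (du x hx) hA).const_mul (2:ℝ)
      refine h1.congr_deriv ?_
      simp only [hp0, hp1, hp2]
      rw [inner_add_right]
      ring
    have G0 : G 0 = 0 := by
      simp only [hGdef]
      rw [hbdryD t htI]
      simp
    have Gcont : ContinuousOn G (Ici 0) :=
      continuousOn_const.mul (cu.inner (cb0.clm_apply cu1))
    have Glim : Tendsto G atTop (𝓝 0) := by
      have hg : Tendsto (fun x => 2 * M * (‖u x t‖ * ‖u1 x t‖)) atTop (𝓝 (2*M*(0*0))) :=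
        (dv.mul dv1).const_mul (2*M)
      rw [show 2*M*((0:ℝ)*0) = 0 by ring] at hg
      refine squeeze_zero_norm' ?_ hg
      filter_upwards [eventually_ge_atTop (0:ℝ)] with x hx
      simp only [hGdef, Real.norm_eq_abs]
      exact aux_inner_op_bound _ M (bb0 x hx) _ _
    have iGd : IntegrableOn (fun x => p1 x + p2 x + p0 x) (Ioi 0) := (ip1.add ip2).add ip0
    have hGint : ∫ x in Ioi (0:ℝ), (p1 x + p2 x + p0 x) = 0 - G 0 :=
      integral_Ioi_of_hasDerivAt_of_tendsto (Gcont.continuousWithinAt self_mem_Ici) dG iGd Glim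
    -- splitting the energy derivative
    have iR : IntegrableOn (fun x => -p1 x - p2 x + p3 x + p4 x) (Ioi 0) :=
      ((ip1.neg.sub ip2).add ip3).add ip4
    have iFG : Integrable (fun x => Fd x + (p1 x + p2 x + p0 x)) (volume.restrict (Ioi 0)) :=
      iFd.add iGd
    have hsplit : (∫ x in Ioi (0:ℝ), 2 * (inner ℝ (u x t) (ut x t) : ℝ))
        = (∫ x in Ioi (0:ℝ), Fd x) + (∫ x in Ioi (0:ℝ), (p1 x + p2 x + p0 x))
          + (∫ x in Ioi (0:ℝ), (-p1 x - p2 x + p3 x + p4 x)) := by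
      have h1 : (∫ x in Ioi (0:ℝ), 2 * (inner ℝ (u x t) (ut x t) : ℝ))
          = ∫ x in Ioi (0:ℝ), (Fd x + (p1 x + p2 x + p0 x) + (-p1 x - p2 x + p3 x + p4 x)) := by
        apply setIntegral_congr_fun measurableSet_Ioi
        intro x hx
        show 2 * (inner ℝ (u x t) (ut x t) : ℝ)
            = Fd x + (p1 x + p2 x + p0 x) + (-p1 x - p2 x + p3 x + p4 x)
        rw [hPDE x hx t ht]
        simp only [hFd, hp0, hp1, hp2, hp3, hp4, inner_add_right, real_inner_smul_right]
        ring
      rw [h1, integral_add iFG iR, integral_add iFd iGd]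
    rw [hsplit, hFint, hGint, F0, G0]
    simp only [sub_zero, zero_add]
    rw [← integral_const_mul]
    apply setIntegral_mono_on iR (i0.const_mul K) measurableSet_Ioi
    intro x hx
    have hell' := hell x (cmono hx) t htI (u1 x t)
    have h2 := aux_inner_op_bound (b' x) M (bb' x (cmono hx)) (u x t) (u1 x t)
    have h3 := aux_inner_op_bound (B₁ x t) M (bb1 x (cmono hx)) (u x t) (u1 x t)
    have h4 := aux_inner_op_bound (B₂ x t) M (bb2 x (cmono hx)) (u x t) (u x t)
    have hell2 : δ * ‖u1 x t‖ ^ 2 ≤ 2 * ⟪u1 x t, B₀ x t (u1 x t)⟫ := by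
      have hc := real_inner_comm (u1 x t) (B₀ x t (u1 x t))
      linarith
    have hb2 := abs_le.1 h2
    have hb3 := abs_le.1 h3
    have hb4 := abs_le.1 h4
    simp only [hp1, hp2, hp3, hp4]
    have hKδ : K * δ = 4 * M ^ 2 + 2 * M * δ := by
      rw [hKdef]; field_simp
    nlinarith [sq_nonneg (δ * ‖u1 x t‖ - 2 * M * ‖u x t‖), norm_nonneg (u x t),
      norm_nonneg (u1 x t), hδ, mul_pos hMpos hδ, hb2.1, hb2.2, hb3.1, hb3.2, hb4.1, hb4.2,
      hell2, hKδ]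

  -- Gronwall
  set E : ℝ → ℝ := fun t => ∫ x in Ioi (0:ℝ), ‖u x t‖ ^ 2 with hEdef
  set E' : ℝ → ℝ := fun t => ∫ x in Ioi (0:ℝ), 2 * (inner ℝ (u x t) (ut x t) : ℝ) with hE'def
  have hEcont : ContinuousOn E (Icc 0 T) := fun t ht => (hE0 t ht).continuousWithinAt
  have hEzero : E 0 = 0 := by
    rw [hEdef]
    simp only
    rw [setIntegral_congr_fun measurableSet_Ioi
      (show EqOn (fun x => ‖u x 0‖ ^ 2) (fun _ => (0:ℝ)) (Ioi 0) by
        intro x hx; simp [hinit x (mem_Ici.2 (mem_Ioi.1 hx).le)])]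
    simp
  have hEpos : ∀ t ∈ Icc (0:ℝ) T, 0 ≤ E t :=
    fun t _ => integral_nonneg (fun x => by positivity)
  have hEderiv : ∀ t ∈ Ioo (0:ℝ) T, HasDerivAt E (E' t) t :=
    fun t ht => (hE0 t ⟨ht.1.le, ht.2.le⟩).hasDerivAt (Icc_mem_nhds ht.1 ht.2)
  have hzero := aux_gronwall_zero T K E E' hEcont hEzero hEpos hEderiv key
  -- conclusion
  intro x hx t ht
  rcases eq_or_lt_of_le (mem_Ici.1 hx) with h0 | hxpos
  · rw [← h0]; exact hbdryD t ht
  · have hcu : ContinuousOn (fun x => ‖u x t‖ ^ 2) (Ioi 0) :=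
      (((slice t ht u (hcont u (by simp))).mono cmono).norm.pow 2)
    have h1 := aux_zero_of_integral (fun x => ‖u x t‖ ^ 2) hcu
      (fun x => by positivity) (hint t ht).1 (hzero t ht)
    have h2 := h1 x hxpos
    have h2' : ‖u x t‖ ^ 2 = 0 := h2
    have h3 : ‖u x t‖ = 0 := by nlinarith [norm_nonneg (u x t)]
    exact norm_eq_zero.1 h3
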